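/- The function x ↦ x·∇G₁(x) (where ∇G₁ is the classical gradient of G₁ on ℝ² \ {0}) is integrable on ℝ², and its Fourier transform satisfies 𝓕[x·∇G₁](ξ) = −2 (4π²‖ξ‖² + 1)^{-1} 𝓕[G₁](ξ) for every ξ ∈ ℝ². -/

import Mathlib

open MeasureTheory Real Set Filter
open scoped Topology

noncomputable section

/-- key elementary bound: `u^k e^{-u} ≤ k^k` for `u ≥ 0`. -/
lemma pow_mul_exp_neg_le {u : ℝ} (hu : 0 ≤ u) (k : ℕ) :
    u ^ k * Real.exp (-u) ≤ (k : ℝ) ^ k := by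
  rcases Nat.eq_zero_or_pos k with hk | hk
  · subst hk; simpa using Real.exp_le_one_iff.mpr (by linarith : -u ≤ 0)
  have h1 : u / k ≤ Real.exp (u / k) := by
    have := Real.add_one_le_exp (u / k); linarith
  have h2 : u ≤ k * Real.exp (u / k) := by
    have hk' : (0:ℝ) < k := by exact_mod_cast hk
    calc u = k * (u / k) := by field_simp
    _ ≤ k * Real.exp (u / k) := by nlinarith
  have h3 : u ^ k ≤ (k * Real.exp (u / k)) ^ k :=
    pow_le_pow_left₀ hu h2 k
  have h4 : (k * Real.exp (u / k)) ^ k = (k:ℝ)^k * Real.exp u := by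
    rw [mul_pow, ← Real.exp_nat_mul]
    congr 1
    field_simp
  rw [h4] at h3
  have he : 0 < Real.exp (-u) := Real.exp_pos _
  calc u ^ k * Real.exp (-u) ≤ ((k:ℝ)^k * Real.exp u) * Real.exp (-u) := by nlinarith
  _ = (k:ℝ)^k := by rw [mul_assoc, ← Real.exp_add]; simp

/-- `t⁻¹ ^ k * e^{-s/(4t)} ≤ (4k/s)^k` for `s, t > 0`. -/
lemma inv_pow_mul_exp_le {s t : ℝ} (hs : 0 < s) (ht : 0 < t) (k : ℕ) :
    (t⁻¹) ^ k * Real.exp (-(s / (4 * t))) ≤ (4 * k / s) ^ k := by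
  set u : ℝ := s / (4 * t) with hu
  have hu0 : 0 < u := by positivity
  have htinv : t⁻¹ = 4 * u / s := by rw [hu]; field_simp
  have key := pow_mul_exp_neg_le hu0.le k
  have h4s : (0:ℝ) < 4 / s := by positivity
  calc (t⁻¹) ^ k * Real.exp (-u) = (4/s)^k * (u ^ k * Real.exp (-u)) := by
        rw [htinv]; rw [div_pow, mul_pow, div_pow]; ring
  _ ≤ (4/s)^k * (k:ℝ)^k := by
        have := pow_mul_exp_neg_le hu0.le k
        exact mul_le_mul_of_nonneg_left this (by positivity)
  _ = (4 * k / s) ^ k := by rw [← mul_pow]; congr 1; field_simp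

lemma exp_split (s t : ℝ) : Real.exp (-s / (4 * t) - t)
    = Real.exp (-(s / (4 * t))) * Real.exp (-t) := by
  rw [← Real.exp_add]; ring_nf

end

noncomputable section
open scoped Topology

lemma meas_exp_term (s : ℝ) : Measurable (fun t : ℝ => Real.exp (-s / (4 * t) - t)) := by
  fun_prop

lemma integrableOn_exp_term {s : ℝ} (hs : 0 ≤ s) :
    IntegrableOn (fun t => Real.exp (-s / (4 * t) - t)) (Ioi (0:ℝ)) := by
  refine Integrable.mono' (g := fun t => Real.exp (-(1:ℝ) * t)) (exp_neg_integrableOn_Ioi 0 one_pos)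
    ((meas_exp_term s).aestronglyMeasurable) ?_
  rw [ae_restrict_iff' measurableSet_Ioi]
  filter_upwards with t ht
  rw [Real.norm_eq_abs, abs_of_pos (Real.exp_pos _)]
  apply Real.exp_le_exp.mpr
  have h1 : -s / (4 * t) ≤ 0 := div_nonpos_of_nonpos_of_nonneg (by linarith) (by linarith [ht.out])
  linarith

lemma integrableOn_inv_sq_exp {s : ℝ} (hs : 0 < s) :
    IntegrableOn (fun t => (t⁻¹)^2 * Real.exp (-s / (4 * t) - t)) (Ioi (0:ℝ)) := by
  refine Integrable.mono' (g := fun t => (8/s)^2 * Real.exp (-(1:ℝ) * t))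
    ((exp_neg_integrableOn_Ioi 0 one_pos).const_mul _)
    ((by fun_prop : Measurable fun t : ℝ => (t⁻¹)^2 * Real.exp (-s / (4 * t) - t)).aestronglyMeasurable) ?_
  rw [ae_restrict_iff' measurableSet_Ioi]
  filter_upwards with t ht
  have ht0 : (0:ℝ) < t := ht.out
  rw [Real.norm_eq_abs, abs_of_nonneg (by positivity)]
  rw [exp_split, ← mul_assoc]
  have h2 := inv_pow_mul_exp_le hs ht0 2
  have : ((4:ℝ) * (2:ℕ) / s) ^ (2:ℕ) = (8/s)^2 := by norm_num
  rw [this] at h2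
  have he : Real.exp (-t) = Real.exp (-(1:ℝ)*t) := by norm_num
  rw [he]
  exact mul_le_mul_of_nonneg_right h2 (Real.exp_pos _).le

lemma integrableOn_inv_exp {s : ℝ} (hs : 0 < s) :
    IntegrableOn (fun t => t⁻¹ * Real.exp (-s / (4 * t) - t)) (Ioi (0:ℝ)) := by
  refine Integrable.mono' (g := fun t => (4/s) * Real.exp (-(1:ℝ) * t))
    ((exp_neg_integrableOn_Ioi 0 one_pos).const_mul _)
    ((by fun_prop : Measurable fun t : ℝ => t⁻¹ * Real.exp (-s / (4 * t) - t)).aestronglyMeasurable) ?_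
  rw [ae_restrict_iff' measurableSet_Ioi]
  filter_upwards with t ht
  have ht0 : (0:ℝ) < t := ht.out
  rw [Real.norm_eq_abs, abs_of_nonneg (by positivity)]
  rw [exp_split, ← mul_assoc]
  have h1 := inv_pow_mul_exp_le hs ht0 1
  simp only [pow_one, Nat.cast_one, mul_one] at h1
  have he : Real.exp (-t) = Real.exp (-(1:ℝ)*t) := by norm_num
  rw [he]
  exact mul_le_mul_of_nonneg_right h1 (Real.exp_pos _).le

end

noncomputable section
open scoped Topology

/-- ℝ², i.e. two-dimensional Euclidean space. -/
abbrev E2 := EuclideanSpace ℝ (Fin 2)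

/-- The Green function `G_λ` of `-Δ + λ` on `ℝ²`, defined via the heat-kernel formula
`G_λ(x) = ∫₀^∞ (4πt)⁻¹ exp(-‖x‖²/(4t) - λt) dt`. -/
noncomputable def greenFn (l : ℝ) (x : E2) : ℝ :=
  ∫ t in Set.Ioi (0 : ℝ), (4 * Real.pi * t)⁻¹ * Real.exp (-‖x‖ ^ 2 / (4 * t) - l * t)

/-- The Fourier transform `𝓕[g](ξ) = ∫ e^{-2πi x·ξ} g(x) dx` of a real-valued function on ℝ². -/
noncomputable def fourierTf (g : E2 → ℝ) (ξ : E2) : ℂ :=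
  ∫ x : E2, Complex.exp (-2 * Real.pi * Complex.I * ((inner ℝ x ξ : ℝ) : ℂ)) * (g x : ℂ)

lemma green_coeff_eq (t : ℝ) : (4 * π * t)⁻¹ = (4*π)⁻¹ * t⁻¹ := by
  rw [mul_inv]

lemma coeff_eq' (t : ℝ) : (4 * π * t)⁻¹ * (4 * t)⁻¹ = (16*π)⁻¹ * (t⁻¹)^2 := by
  rcases eq_or_ne t 0 with rfl | ht
  · simp
  · field_simp
    ring

lemma deriv_coeff_eq (t : ℝ) : -((4 * π * t)⁻¹ * (4 * t)⁻¹) = -(16*π)⁻¹ * (t⁻¹)^2 := by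
  rw [coeff_eq']; ring

lemma integrableOn_green_term {s : ℝ} (hs : 0 < s) :
    IntegrableOn (fun t => (4*π*t)⁻¹ * Real.exp (-s / (4 * t) - t)) (Ioi (0:ℝ)) := by
  simp_rw [green_coeff_eq, mul_assoc]
  exact (integrableOn_inv_exp hs).const_mul _

lemma integrableOn_deriv_term {s : ℝ} (hs : 0 < s) :
    IntegrableOn (fun t => -((4*π*t)⁻¹ * (4*t)⁻¹) * Real.exp (-s / (4 * t) - t)) (Ioi (0:ℝ)) := by
  simp_rw [deriv_coeff_eq, mul_assoc]
  exact (integrableOn_inv_sq_exp hs).const_mul _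

lemma hasDerivAt_green_integrand {t : ℝ} (ht : 0 < t) (s : ℝ) :
    HasDerivAt (fun s : ℝ => (4*π*t)⁻¹ * Real.exp (-s / (4 * t) - t))
      (-((4*π*t)⁻¹ * (4*t)⁻¹) * Real.exp (-s / (4 * t) - t)) s := by
  have h0 : HasDerivAt (fun s : ℝ => -s / (4 * t) - t) (-(4*t)⁻¹) s := by
    have := (((hasDerivAt_id s).neg.div_const (4*t)).sub_const t)
    simpa [neg_div, one_div] using this
  have h1 := (h0.exp).const_mul ((4*π*t)⁻¹)
  refine h1.congr_deriv ?_
  ring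

lemma hasDerivAt_F {s₀ : ℝ} (hs : 0 < s₀) :
    HasDerivAt (fun s => ∫ t in Ioi (0:ℝ), (4*π*t)⁻¹ * Real.exp (-s / (4 * t) - t))
      (∫ t in Ioi (0:ℝ), -((4*π*t)⁻¹ * (4*t)⁻¹) * Real.exp (-s₀ / (4 * t) - t)) s₀ := by
  have hmain := hasDerivAt_integral_of_dominated_loc_of_deriv_le
    (μ := volume.restrict (Ioi (0:ℝ)))
    (F := fun s t => (4*π*t)⁻¹ * Real.exp (-s / (4 * t) - t))
    (F' := fun s t => -((4*π*t)⁻¹ * (4*t)⁻¹) * Real.exp (-s / (4 * t) - t))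
    (x₀ := s₀) (s := Metric.ball s₀ (s₀/2))
    (bound := fun t => (16*π)⁻¹ * ((16/s₀)^2 * Real.exp (-(1:ℝ)*t)))
    (Metric.ball_mem_nhds _ (by positivity))
    (Eventually.of_forall fun s =>
      ((by fun_prop : Measurable fun t : ℝ => (4*π*t)⁻¹ * Real.exp (-s / (4 * t) - t)).aestronglyMeasurable))
    (integrableOn_green_term hs)
    ((by fun_prop : Measurable fun t : ℝ => -((4*π*t)⁻¹ * (4*t)⁻¹) * Real.exp (-s₀ / (4 * t) - t)).aestronglyMeasurable)
    ?_ (((exp_neg_integrableOn_Ioi 0 one_pos).const_mul _).const_mul _) ?_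
  · exact hmain.2
  · rw [ae_restrict_iff' measurableSet_Ioi]
    filter_upwards with t ht s hsb
    have ht0 : (0:ℝ) < t := ht.out
    have hs2 : s₀/2 ≤ s := by
      have := abs_sub_lt_iff.mp (mem_ball_iff_norm.mp hsb)
      linarith [this.1, this.2]
    have b2 : (t⁻¹)^2 * Real.exp (-((s₀/2) / (4*t))) ≤ (16/s₀)^2 := by
      have h := inv_pow_mul_exp_le (half_pos hs) ht0 2
      have e : ((4:ℝ) * (2:ℕ) / (s₀/2)) = 16/s₀ := by push_cast; field_simp; ring
      rwa [e] at h
    have b1 : Real.exp (-(s / (4*t))) ≤ Real.exp (-((s₀/2) / (4*t))) := by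
      apply Real.exp_le_exp.mpr
      apply neg_le_neg
      gcongr
    rw [norm_mul, Real.norm_eq_abs, Real.norm_eq_abs, abs_neg,
      abs_of_nonneg (by positivity), abs_of_nonneg (Real.exp_pos _).le, exp_split,
      coeff_eq']
    rw [show Real.exp (-(1:ℝ)*t) = Real.exp (-t) by norm_num]
    calc (16*π)⁻¹ * (t⁻¹)^2 * (Real.exp (-(s/(4*t))) * Real.exp (-t))
        ≤ (16*π)⁻¹ * (t⁻¹)^2 * (Real.exp (-((s₀/2)/(4*t))) * Real.exp (-t)) := by
          apply mul_le_mul_of_nonneg_left (mul_le_mul_of_nonneg_right b1 (Real.exp_pos _).le) (by positivity)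
      _ = (16*π)⁻¹ * (((t⁻¹)^2 * Real.exp (-((s₀/2)/(4*t)))) * Real.exp (-t)) := by ring
      _ ≤ (16*π)⁻¹ * ((16/s₀)^2 * Real.exp (-t)) := by
          apply mul_le_mul_of_nonneg_left (mul_le_mul_of_nonneg_right b2 (Real.exp_pos _).le) (by positivity)
  · rw [ae_restrict_iff' measurableSet_Ioi]
    filter_upwards with t ht s _
    exact hasDerivAt_green_integrand ht.out s

end

noncomputable section
open scoped Topology

lemma green_eq_comp : greenFn 1 =
    (fun s => ∫ t in Ioi (0:ℝ), (4*π*t)⁻¹ * Real.exp (-s / (4 * t) - t)) ∘ (fun y : E2 => ‖y‖^2) := by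
  funext y
  simp [greenFn]

lemma hasFDerivAt_green {x : E2} (hx : x ≠ 0) :
    HasFDerivAt (greenFn 1)
      ((∫ t in Ioi (0:ℝ), -((4*π*t)⁻¹ * (4*t)⁻¹) * Real.exp (-‖x‖^2 / (4 * t) - t)) • (2 • (innerSL ℝ) x)) x := by
  have hn : 0 < ‖x‖ := norm_pos_iff.mpr hx
  have hs : 0 < ‖x‖^2 := by positivity
  rw [green_eq_comp]
  exact (hasDerivAt_F hs).comp_hasFDerivAt x (hasStrictFDerivAt_norm_sq x).hasFDerivAt

lemma fderiv_green_apply {x : E2} (hx : x ≠ 0) :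
    fderiv ℝ (greenFn 1) x x
      = (∫ t in Ioi (0:ℝ), -((4*π*t)⁻¹ * (4*t)⁻¹) * Real.exp (-‖x‖^2 / (4 * t) - t)) * (2 * ‖x‖^2) := by
  rw [(hasFDerivAt_green hx).fderiv]
  simp only [ContinuousLinearMap.smul_apply, ContinuousLinearMap.coe_smul', Pi.smul_apply,
    innerSL_apply_apply, real_inner_self_eq_norm_sq, smul_eq_mul]
  ring

lemma ibp {s : ℝ} (hs : 0 < s) :
    ∫ t in Ioi (0:ℝ), (s/(4*t^2) - 1) * Real.exp (-s / (4 * t) - t) = 0 := by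
  set f : ℝ → ℝ := fun t => if t ≤ 0 then 0 else Real.exp (-s / (4 * t) - t) with hf
  have h00 : f 0 = 0 := by simp [hf]
  have hderiv : ∀ t ∈ Ioi (0:ℝ), HasDerivAt f ((s/(4*t^2) - 1) * Real.exp (-s / (4 * t) - t)) t := by
    intro t ht
    have ht0 : (0:ℝ) < t := ht
    have h4t : (4:ℝ)*t ≠ 0 := by positivity
    have hin : HasDerivAt (fun t : ℝ => -s / (4 * t) - t) (s/(4*t^2) - 1) t := by
      have h1 : HasDerivAt (fun t : ℝ => 4*t) 4 t := by
        simpa using (hasDerivAt_id t).const_mul (4:ℝ)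
      have h2 := (hasDerivAt_const t (-s)).div h1 h4t
      have h3 := h2.sub (hasDerivAt_id t)
      refine h3.congr_deriv ?_
      field_simp
      ring
    have hg : HasDerivAt (fun t : ℝ => Real.exp (-s / (4 * t) - t))
        ((s/(4*t^2) - 1) * Real.exp (-s / (4 * t) - t)) t := by
      have := hin.exp
      convert this using 1
      ring
    apply hg.congr_of_eventuallyEq
    filter_upwards [eventually_gt_nhds ht0] with u hu
    simp [hf, not_le.mpr hu]
  have htend : Tendsto f atTop (𝓝 0) := by
    have h1 : Tendsto (fun t : ℝ => -s / (4 * t) - t) atTop atBot := by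
      have ha : Tendsto (fun t : ℝ => -s / (4 * t)) atTop (𝓝 0) := by
        have : (fun t : ℝ => -s / (4 * t)) = fun t : ℝ => (-s/4) * t⁻¹ := by
          funext t; field_simp
        rw [this]
        simpa using tendsto_inv_atTop_zero.const_mul (-s/4)
      have hb : Tendsto (fun t : ℝ => -t) atTop atBot := tendsto_neg_atBot_iff.mpr tendsto_id
      exact ha.add_atBot hb
    have h2 : Tendsto (fun t : ℝ => Real.exp (-s / (4 * t) - t)) atTop (𝓝 0) :=
      Real.tendsto_exp_atBot.comp h1
    apply h2.congr'
    filter_upwards [eventually_gt_atTop (0:ℝ)] with u hu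
    simp [hf, not_le.mpr hu]
  have hcont : ContinuousWithinAt f (Ici (0:ℝ)) 0 := by
    rw [ContinuousWithinAt, h00, ← Ioi_insert, nhdsWithin_insert]
    rw [tendsto_sup]
    constructor
    · simpa [h00] using tendsto_pure_nhds f 0
    · have h1 : Tendsto (fun t : ℝ => -s / (4 * t) - t) (𝓝[>] (0:ℝ)) atBot := by
        have ha : Tendsto (fun t : ℝ => -s / (4 * t)) (𝓝[>] (0:ℝ)) atBot := by
          have : (fun t : ℝ => -s / (4 * t)) = fun t : ℝ => (-s/4) * t⁻¹ := by
            funext t; field_simp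
          rw [this]
          have hinv : Tendsto (fun t : ℝ => t⁻¹) (𝓝[>] (0:ℝ)) atTop := tendsto_inv_nhdsGT_zero
          have hc : -s/4 < 0 := by linarith [hs]
          exact Tendsto.const_mul_atTop_of_neg hc hinv
        have hb : Tendsto (fun t : ℝ => -t) (𝓝[>] (0:ℝ)) (𝓝 0) := by
          have : Tendsto (fun t : ℝ => t) (𝓝[>] (0:ℝ)) (𝓝 0) :=
            tendsto_id.mono_right nhdsWithin_le_nhds
          simpa using this.neg
        exact (hb.add_atBot ha).congr (fun t => by ring)
      have h2 : Tendsto (fun t : ℝ => Real.exp (-s / (4 * t) - t)) (𝓝[>] (0:ℝ)) (𝓝 0) :=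
        Real.tendsto_exp_atBot.comp h1
      apply h2.congr'
      filter_upwards [self_mem_nhdsWithin] with u hu
      simp [hf, not_le.mpr (show (0:ℝ) < u from hu)]
  have hint : IntegrableOn (fun t => (s/(4*t^2) - 1) * Real.exp (-s / (4 * t) - t)) (Ioi (0:ℝ)) := by
    have hcomb : IntegrableOn
        (fun t => s/4 * ((t⁻¹)^2 * Real.exp (-s / (4 * t) - t)) - Real.exp (-s / (4 * t) - t))
        (Ioi (0:ℝ)) := ((integrableOn_inv_sq_exp hs).const_mul (s/4)).sub (integrableOn_exp_term hs.le)
    apply hcomb.congr_fun ?_ measurableSet_Ioi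
    intro t ht
    have ht0 : (t:ℝ) ≠ 0 := ne_of_gt ht
    field_simp
  have := integral_Ioi_of_hasDerivAt_of_tendsto hcont hderiv hint htend
  rw [this, h00, sub_zero]

end

noncomputable section
open scoped Topology

lemma deriv_integral_eq {s : ℝ} (hs : 0 < s) :
    (∫ t in Ioi (0:ℝ), -((4*π*t)⁻¹ * (4*t)⁻¹) * Real.exp (-s / (4 * t) - t)) * (2*s)
      = -(2*π)⁻¹ * ∫ t in Ioi (0:ℝ), Real.exp (-s / (4 * t) - t) := by
  have hK : IntegrableOn (fun t => (t⁻¹)^2 * Real.exp (-s / (4 * t) - t)) (Ioi (0:ℝ)) :=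
    integrableOn_inv_sq_exp hs
  have hJ := integrableOn_exp_term hs.le
  set J := ∫ t in Ioi (0:ℝ), Real.exp (-s / (4 * t) - t) with hJdef
  set K := ∫ t in Ioi (0:ℝ), (t⁻¹)^2 * Real.exp (-s / (4 * t) - t) with hKdef
  have hibp : s/4 * K - J = 0 := by
    rw [← ibp hs, hKdef, hJdef, ← integral_const_mul, ← integral_sub (hK.const_mul _) hJ]
    apply setIntegral_congr_fun measurableSet_Ioi
    intro t ht
    have ht0 : (t:ℝ) ≠ 0 := ne_of_gt ht
    field_simp
  have hDF : (∫ t in Ioi (0:ℝ), -((4*π*t)⁻¹ * (4*t)⁻¹) * Real.exp (-s / (4 * t) - t))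
      = -(16*π)⁻¹ * K := by
    rw [hKdef, ← integral_const_mul]
    apply setIntegral_congr_fun measurableSet_Ioi
    intro t _
    simp only []
    rw [deriv_coeff_eq]
    ring
  rw [hDF]
  have hKJ : K = 4*J/s := by
    field_simp at hibp
    field_simp
    linarith
  rw [hKJ]
  have hpi : (π:ℝ) ≠ 0 := Real.pi_ne_zero
  field_simp
  ring

/-- the "nice" representative of `x ↦ x ⬝ ∇ G₁(x)`. -/
noncomputable def dilG (x : E2) : ℝ :=
  -(2*π)⁻¹ * ∫ t in Ioi (0:ℝ), Real.exp (-‖x‖^2 / (4 * t) - t)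

lemma fderiv_green_eq_dilG {x : E2} (hx : x ≠ 0) :
    fderiv ℝ (greenFn 1) x x = dilG x := by
  have hn : 0 < ‖x‖ := norm_pos_iff.mpr hx
  have hs : 0 < ‖x‖^2 := by positivity
  rw [fderiv_green_apply hx, deriv_integral_eq hs, dilG]

lemma fderiv_green_ae : (fun x : E2 => fderiv ℝ (greenFn 1) x x) =ᵐ[volume] dilG := by
  have h0 : (volume : Measure E2) {0} = 0 := measure_singleton 0
  rw [Filter.eventuallyEq_iff_exists_mem]
  refine ⟨{(0:E2)}ᶜ, ?_, fun x hx => fderiv_green_eq_dilG hx⟩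
  rw [mem_ae_iff, compl_compl]
  exact h0

end

noncomputable section
open scoped Topology

lemma finrank_E2 : Module.finrank ℝ E2 = 2 := finrank_euclideanSpace_fin

lemma gauss_cexp_integral {b : ℝ} (hb : 0 < b) :
    ∫ x : E2, Complex.exp (-(b:ℂ) * (‖x‖:ℂ)^2) = ((π / b : ℝ) : ℂ) := by
  have h := GaussianFourier.integral_cexp_neg_mul_sq_norm_add (b := (b:ℂ))
      (by simpa using hb) 0 (0 : E2)
  simp only [zero_mul, inner_zero_left, Complex.ofReal_zero, mul_zero, add_zero,
    ne_eq, OfNat.ofNat_ne_zero, not_false_eq_true, zero_pow, zero_div, Complex.exp_zero,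
    mul_one, finrank_E2] at h
  rw [h]
  rw [show ((2:ℕ):ℂ)/2 = 1 by norm_num, Complex.cpow_one, Complex.ofReal_div]

lemma gauss_real_integral {b : ℝ} (hb : 0 < b) :
    ∫ x : E2, Real.exp (-b * ‖x‖^2) = π / b := by
  have h1 : ((∫ x : E2, Real.exp (-b * ‖x‖^2) : ℝ) : ℂ)
      = ∫ x : E2, ((Real.exp (-b * ‖x‖^2) : ℝ) : ℂ) := integral_ofReal.symm
  have h2 : (∫ x : E2, ((Real.exp (-b * ‖x‖^2) : ℝ) : ℂ))
      = ∫ x : E2, Complex.exp (-(b:ℂ) * (‖x‖:ℂ)^2) := by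
    congr 1
    funext x
    rw [Complex.ofReal_exp]
    push_cast
    ring_nf
  exact_mod_cast h1.trans (h2.trans (gauss_cexp_integral hb))

lemma gauss_integrable {b : ℝ} (hb : 0 < b) :
    Integrable (fun x : E2 => Real.exp (-b * ‖x‖^2)) := by
  have h := GaussianFourier.integrable_cexp_neg_mul_sq_norm_add (b := (b:ℂ))
      (by simpa using hb) 0 (0 : E2)
  have h2 := h.norm
  apply h2.congr
  filter_upwards with x
  rw [Complex.norm_exp]
  congr 1
  rw [show -(b:ℂ) * (‖x‖:ℂ)^2 + 0 * ((inner ℝ (0:E2) x : ℝ):ℂ) = ((-b * ‖x‖^2 : ℝ) : ℂ) by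
    push_cast; ring, Complex.ofReal_re]

lemma prod_meas (φ : ℝ → ℝ) (hφm : Measurable φ) :
    Measurable (fun p : E2 × ℝ => φ p.2 * Real.exp (-‖p.1‖^2 / (4*p.2) - p.2)) := by
  have h1 : Measurable (fun p : E2 × ℝ => Real.exp (-‖p.1‖^2 / (4*p.2) - p.2)) := by fun_prop
  exact (hφm.comp measurable_snd).mul h1

lemma slice_eq (φ : ℝ → ℝ) (t : ℝ) :
    (fun x : E2 => φ t * Real.exp (-‖x‖^2 / (4*t) - t))
      = fun x : E2 => (φ t * Real.exp (-t)) * Real.exp (-(4*t)⁻¹ * ‖x‖^2) := by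
  funext x
  rw [show -(4*t)⁻¹ * ‖x‖^2 = -(‖x‖^2/(4*t)) by ring, exp_split]
  ring

lemma slice_integral (φ : ℝ → ℝ) {t : ℝ} (ht : 0 < t) :
    ∫ x : E2, φ t * Real.exp (-‖x‖^2 / (4*t) - t) = φ t * (4*π*t) * Real.exp (-t) := by
  rw [slice_eq, MeasureTheory.integral_const_mul, gauss_real_integral (by positivity)]
  have h4t : (4:ℝ)*t ≠ 0 := by positivity
  field_simp

lemma prod_integrable_weighted {φ : ℝ → ℝ} (hφm : Measurable φ)
    (hφnn : ∀ t ∈ Ioi (0:ℝ), 0 ≤ φ t)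
    (hφint : IntegrableOn (fun t => φ t * (4*π*t) * Real.exp (-t)) (Ioi (0:ℝ))) :
    Integrable (fun p : E2 × ℝ => φ p.2 * Real.exp (-‖p.1‖^2 / (4*p.2) - p.2))
      ((volume : Measure E2).prod (volume.restrict (Ioi (0:ℝ)))) := by
  rw [integrable_prod_iff' (prod_meas φ hφm).aestronglyMeasurable]
  constructor
  · rw [ae_restrict_iff' measurableSet_Ioi]
    filter_upwards with t ht
    have ht0 : (0:ℝ) < t := ht
    rw [slice_eq]
    exact (gauss_integrable (by positivity)).const_mul _
  · apply Integrable.congr hφint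
    rw [Filter.eventuallyEq_iff_exists_mem]
    refine ⟨Ioi 0, ?_, fun t ht => ?_⟩
    · rw [mem_ae_iff]
      have he : (Ioi (0:ℝ))ᶜ ∩ Ioi 0 = ∅ := compl_inter_self _
      rw [Measure.restrict_apply (measurableSet_Ioi.compl), he]
      simp
    · have ht0 : (0:ℝ) < t := ht
      have hnn : 0 ≤ φ t := hφnn t ht
      symm
      calc (∫ x : E2, ‖φ t * Real.exp (-‖x‖^2 / (4*t) - t)‖)
          = ∫ x : E2, φ t * Real.exp (-‖x‖^2 / (4*t) - t) := by
            congr 1; funext x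
            rw [Real.norm_eq_abs, abs_of_nonneg (by positivity)]
        _ = φ t * (4*π*t) * Real.exp (-t) := slice_integral φ ht0
end

noncomputable section
open scoped Topology

lemma norm_e (ξ x : E2) :
    ‖Complex.exp (-2 * ↑π * Complex.I * ((inner ℝ x ξ : ℝ) : ℂ))‖ = 1 := by
  rw [Complex.norm_exp]
  rw [show -2 * (π:ℂ) * Complex.I * ((inner ℝ x ξ : ℝ) : ℂ)
      = ((-2 * π * (inner ℝ x ξ : ℝ) : ℝ) : ℂ) * Complex.I by push_cast; ring]
  simp

lemma ae_snd_pos : ∀ᵐ p : E2 × ℝ ∂((volume : Measure E2).prod (volume.restrict (Ioi (0:ℝ)))),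
    p.2 ∈ Ioi (0:ℝ) := by
  rw [ae_iff]
  have hset : {p : E2 × ℝ | ¬ p.2 ∈ Ioi (0:ℝ)} = (univ : Set E2) ×ˢ ((Ioi (0:ℝ))ᶜ) := by
    ext p; simp [Set.mem_prod]
  rw [hset, Measure.prod_prod, Measure.restrict_apply (measurableSet_Ioi.compl),
    compl_inter_self]
  simp

lemma prod_integrable_weighted_cexp (ξ : E2) {φ : ℝ → ℝ} (hφm : Measurable φ)
    (hφnn : ∀ t ∈ Ioi (0:ℝ), 0 ≤ φ t)
    (hφint : IntegrableOn (fun t => φ t * (4*π*t) * Real.exp (-t)) (Ioi (0:ℝ))) :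
    Integrable (fun p : E2 × ℝ => Complex.exp (-2 * ↑π * Complex.I * ((inner ℝ p.1 ξ : ℝ) : ℂ))
        * ((φ p.2 * Real.exp (-‖p.1‖^2 / (4*p.2) - p.2) : ℝ) : ℂ))
      ((volume : Measure E2).prod (volume.restrict (Ioi (0:ℝ)))) := by
  have hbase := prod_integrable_weighted hφm hφnn hφint
  have hmeas : AEStronglyMeasurable
      (fun p : E2 × ℝ => Complex.exp (-2 * ↑π * Complex.I * ((inner ℝ p.1 ξ : ℝ) : ℂ))
        * ((φ p.2 * Real.exp (-‖p.1‖^2 / (4*p.2) - p.2) : ℝ) : ℂ))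
      ((volume : Measure E2).prod (volume.restrict (Ioi (0:ℝ)))) := by
    apply AEStronglyMeasurable.mul
    · apply Continuous.aestronglyMeasurable
      apply Complex.continuous_exp.comp
      apply Continuous.mul continuous_const
      exact Complex.continuous_ofReal.comp ((continuous_fst.inner continuous_const))
    · exact (Complex.continuous_ofReal.measurable.comp (prod_meas φ hφm)).aestronglyMeasurable
  apply Integrable.mono' hbase hmeas
  filter_upwards [ae_snd_pos] with p hp
  rw [norm_mul, norm_e]
  rw [Complex.norm_real, Real.norm_eq_abs, one_mul,
    abs_of_nonneg (mul_nonneg (hφnn p.2 hp) (Real.exp_pos _).le)]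

lemma point_eq (c t : ℝ) (x ξ : E2) :
    Complex.exp (-2 * ↑π * Complex.I * ((inner ℝ x ξ : ℝ) : ℂ))
        * ((c * Real.exp (-‖x‖^2 / (4*t) - t) : ℝ) : ℂ)
      = ((c * Real.exp (-t) : ℝ) : ℂ)
        * Complex.exp (-(((4*t : ℝ)) : ℂ)⁻¹ * (‖x‖ : ℂ)^2
            + (-2 * ↑π * Complex.I) * ((inner ℝ ξ x : ℝ) : ℂ)) := by
  rw [real_inner_comm ξ x]
  rw [show (-‖x‖^2 / (4*t) - t : ℝ) = (-‖x‖^2 / (4*t)) + (-t) by ring, Real.exp_add]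
  rw [Complex.exp_add]
  push_cast [Complex.ofReal_exp]
  rw [show -((‖x‖:ℂ))^2 / (4 * (t:ℂ)) = -(4 * (t:ℂ))⁻¹ * (‖x‖:ℂ)^2 by ring]
  ring
end

noncomputable section
open scoped Topology

lemma inner_fourier (ξ : E2) (φ : ℝ → ℝ) {t : ℝ} (ht : 0 < t) :
    (∫ x : E2, Complex.exp (-2 * ↑π * Complex.I * ((inner ℝ x ξ : ℝ) : ℂ))
        * ((φ t * Real.exp (-‖x‖^2 / (4*t) - t) : ℝ) : ℂ))
      = ((φ t * (4*π*t) * Real.exp (-((4*π^2*‖ξ‖^2 + 1) * t)) : ℝ) : ℂ) := by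
  have hb : 0 < (((4*t : ℝ) : ℂ)⁻¹).re := by
    rw [← Complex.ofReal_inv, Complex.ofReal_re]
    positivity
  have key := GaussianFourier.integral_cexp_neg_mul_sq_norm_add
    (b := (((4*t : ℝ)) : ℂ)⁻¹) hb (-2 * ↑π * Complex.I) ξ (V := E2)
  rw [show (fun x : E2 => Complex.exp (-2 * ↑π * Complex.I * ((inner ℝ x ξ : ℝ) : ℂ))
        * ((φ t * Real.exp (-‖x‖^2 / (4*t) - t) : ℝ) : ℂ))
      = fun x : E2 => ((φ t * Real.exp (-t) : ℝ) : ℂ)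
        * Complex.exp (-(((4*t : ℝ)) : ℂ)⁻¹ * (‖x‖ : ℂ)^2
            + (-2 * ↑π * Complex.I) * ((inner ℝ ξ x : ℝ) : ℂ)) from funext fun x => point_eq (φ t) t x ξ]
  rw [MeasureTheory.integral_const_mul, key, finrank_E2]
  rw [show ((2:ℕ):ℂ)/2 = 1 by norm_num, Complex.cpow_one]
  have ht' : (t:ℂ) ≠ 0 := by exact_mod_cast ne_of_gt ht
  have h1 : ((π:ℝ):ℂ) / (((4*t : ℝ)) : ℂ)⁻¹ = ((4*π*t : ℝ) : ℂ) := by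
    push_cast
    field_simp
  have h2 : (-2 * ↑π * Complex.I)^2 * ((‖ξ‖:ℝ):ℂ)^2 / (4 * (((4*t : ℝ)) : ℂ)⁻¹)
      = ((-(4*π^2*‖ξ‖^2 * t) : ℝ) : ℂ) := by
    rw [show (-2 * (π:ℂ) * Complex.I)^2 = 4 * (π:ℂ)^2 * (Complex.I^2) by ring, Complex.I_sq]
    push_cast
    field_simp
  rw [h1, h2]
  have hreal : (φ t * Real.exp (-t)) * ((4*π*t) * Real.exp (-(4*π^2*‖ξ‖^2*t)))
      = φ t * (4*π*t) * Real.exp (-((4*π^2*‖ξ‖^2+1)*t)) := by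
    rw [show -((4*π^2*‖ξ‖^2+1)*t) = -t + -(4*π^2*‖ξ‖^2*t) by ring, Real.exp_add]
    ring
  exact_mod_cast hreal

lemma integral_exp_decay {a : ℝ} (ha : 0 < a) :
    ∫ t in Ioi (0:ℝ), Real.exp (-(a*t)) = a⁻¹ := by
  have h := integral_rpow_mul_exp_neg_mul_Ioi (a := 1) (r := a) one_pos ha
  simp only [sub_self, Real.rpow_zero, one_mul, Real.rpow_one, Real.Gamma_one, mul_one] at h
  rw [h, one_div]

lemma integral_t_exp_decay {a : ℝ} (ha : 0 < a) :
    ∫ t in Ioi (0:ℝ), t * Real.exp (-(a*t)) = (a⁻¹)^2 := by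
  have h := integral_rpow_mul_exp_neg_mul_Ioi (a := 2) (r := a) two_pos ha
  norm_num [Real.rpow_one, Real.Gamma_two] at h
  rw [h, ← inv_pow]

lemma fourierTf_weighted (ξ : E2) {φ : ℝ → ℝ} (hφm : Measurable φ)
    (hφnn : ∀ t ∈ Ioi (0:ℝ), 0 ≤ φ t)
    (hφint : IntegrableOn (fun t => φ t * (4*π*t) * Real.exp (-t)) (Ioi (0:ℝ))) :
    fourierTf (fun x : E2 => ∫ t in Ioi (0:ℝ), φ t * Real.exp (-‖x‖^2 / (4*t) - t)) ξ
      = ((∫ t in Ioi (0:ℝ), φ t * (4*π*t) * Real.exp (-((4*π^2*‖ξ‖^2 + 1) * t)) : ℝ) : ℂ) := by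
  rw [fourierTf]
  have step1 : (∫ x : E2, Complex.exp (-2 * ↑π * Complex.I * ((inner ℝ x ξ : ℝ) : ℂ))
        * ((∫ t in Ioi (0:ℝ), φ t * Real.exp (-‖x‖^2 / (4*t) - t) : ℝ) : ℂ))
      = ∫ x : E2, ∫ t in Ioi (0:ℝ), Complex.exp (-2 * ↑π * Complex.I * ((inner ℝ x ξ : ℝ) : ℂ))
        * ((φ t * Real.exp (-‖x‖^2 / (4*t) - t) : ℝ) : ℂ) := by
    congr 1
    funext x
    rw [show ((∫ t in Ioi (0:ℝ), φ t * Real.exp (-‖x‖^2 / (4*t) - t) : ℝ) : ℂ)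
        = ∫ t in Ioi (0:ℝ), ((φ t * Real.exp (-‖x‖^2 / (4*t) - t) : ℝ) : ℂ) from integral_ofReal.symm]
    rw [MeasureTheory.integral_const_mul]
  rw [step1]
  rw [MeasureTheory.integral_integral_swap (prod_integrable_weighted_cexp ξ hφm hφnn hφint)]
  rw [show (∫ t in Ioi (0:ℝ), ∫ x : E2, Complex.exp (-2 * ↑π * Complex.I * ((inner ℝ x ξ : ℝ) : ℂ))
        * ((φ t * Real.exp (-‖x‖^2 / (4*t) - t) : ℝ) : ℂ))
      = ∫ t in Ioi (0:ℝ), ((φ t * (4*π*t) * Real.exp (-((4*π^2*‖ξ‖^2 + 1) * t)) : ℝ) : ℂ) from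
    setIntegral_congr_fun measurableSet_Ioi fun t ht => inner_fourier ξ φ ht]
  exact integral_ofReal

end

noncomputable section
open scoped Topology

lemma fourierTf_const_mul (c : ℝ) (g : E2 → ℝ) (ξ : E2) :
    fourierTf (fun x => c * g x) ξ = (c:ℂ) * fourierTf g ξ := by
  rw [fourierTf, fourierTf, ← MeasureTheory.integral_const_mul]
  congr 1
  funext x
  push_cast
  ring

lemma phi1_int : IntegrableOn (fun t => (4*π*t)⁻¹ * (4*π*t) * Real.exp (-t)) (Ioi (0:ℝ)) := by
  apply (exp_neg_integrableOn_Ioi 0 one_pos).congr_fun ?_ measurableSet_Ioi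
  intro t ht
  have h4 : (4*π*t) ≠ 0 := by
    have := ht.out
    positivity
  show Real.exp (-1*t) = (4*π*t)⁻¹ * (4*π*t) * Real.exp (-t)
  rw [inv_mul_cancel₀ h4, one_mul]
  norm_num

lemma phi0_int : IntegrableOn (fun t => 1 * (4*π*t) * Real.exp (-t)) (Ioi (0:ℝ)) := by
  have base : IntegrableOn (fun t => 4*π*(Real.exp (-t) * t ^ (2-1:ℝ))) (Ioi (0:ℝ)) :=
    (Real.GammaIntegral_convergent (s := 2) (by norm_num)).const_mul (4*π)
  apply base.congr_fun ?_ measurableSet_Ioi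
  intro t _
  show 4*π*(Real.exp (-t) * t ^ (2-1:ℝ)) = 1 * (4*π*t) * Real.exp (-t)
  rw [show (2-1:ℝ) = 1 by norm_num, Real.rpow_one]
  ring

lemma green_as_integral : greenFn 1 =
    fun x : E2 => ∫ t in Ioi (0:ℝ), (4*π*t)⁻¹ * Real.exp (-‖x‖^2 / (4*t) - t) := by
  funext x
  simp [greenFn]

lemma fourier_green (ξ : E2) :
    fourierTf (greenFn 1) ξ = (((4*π^2*‖ξ‖^2 + 1 : ℝ)⁻¹ : ℝ) : ℂ) := by
  have ha : 0 < 4*π^2*‖ξ‖^2 + 1 := by positivity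
  rw [green_as_integral]
  have h := fourierTf_weighted ξ (φ := fun t => (4*π*t)⁻¹) (by fun_prop)
    (fun t ht => by have := ht.out; positivity) phi1_int
  rw [h]
  congr 1
  rw [show (∫ t in Ioi (0:ℝ), (4*π*t)⁻¹ * (4*π*t) * Real.exp (-((4*π^2*‖ξ‖^2 + 1) * t)))
      = ∫ t in Ioi (0:ℝ), Real.exp (-((4*π^2*‖ξ‖^2 + 1) * t)) from
    setIntegral_congr_fun measurableSet_Ioi fun t ht => by
      have h4 : (4*π*t) ≠ 0 := by have := ht.out; positivity
      show (4*π*t)⁻¹ * (4*π*t) * Real.exp (-((4*π^2*‖ξ‖^2 + 1) * t))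
          = Real.exp (-((4*π^2*‖ξ‖^2 + 1) * t))
      rw [inv_mul_cancel₀ h4, one_mul]]
  exact integral_exp_decay ha

lemma fourier_dilG (ξ : E2) :
    fourierTf dilG ξ
      = ((-(2*π)⁻¹ * (4*π*(((4*π^2*‖ξ‖^2 + 1 : ℝ)⁻¹)^2)) : ℝ) : ℂ) := by
  have ha : 0 < 4*π^2*‖ξ‖^2 + 1 := by positivity
  rw [show dilG = fun x : E2 => -(2*π)⁻¹ * (∫ t in Ioi (0:ℝ), Real.exp (-‖x‖^2 / (4*t) - t))
      from rfl]
  rw [fourierTf_const_mul]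
  have h := fourierTf_weighted ξ (φ := fun _ => (1:ℝ)) measurable_const
    (fun _ _ => zero_le_one) phi0_int
  simp only [one_mul] at h
  rw [h]
  rw [show (∫ t in Ioi (0:ℝ), (4*π*t) * Real.exp (-((4*π^2*‖ξ‖^2 + 1) * t)))
      = ∫ t in Ioi (0:ℝ), (4*π) * (t * Real.exp (-((4*π^2*‖ξ‖^2 + 1) * t))) from by
    congr 1; funext t; ring]
  rw [MeasureTheory.integral_const_mul, integral_t_exp_decay ha]
  push_cast
  ring

lemma integrable_dilG : Integrable dilG := by
  have hp := prod_integrable_weighted (φ := fun _ => (1:ℝ)) measurable_const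
    (fun _ _ => zero_le_one) phi0_int
  have h2 := hp.integral_prod_left
  simp only [one_mul] at h2
  exact h2.const_mul _

/-- The function `x ↦ x·∇G₁(x)` (the classical dilation derivative of `G₁` on `ℝ² \ {0}`)
is integrable on ℝ² and its Fourier transform satisfies
`𝓕[x·∇G₁](ξ) = -2 (4π²‖ξ‖² + 1)⁻¹ 𝓕[G₁](ξ)` for every `ξ ∈ ℝ²`. -/
theorem fourier_dilation_deriv_green :
    Integrable (fun x : E2 => fderiv ℝ (greenFn 1) x x) ∧
      ∀ ξ : E2, fourierTf (fun x : E2 => fderiv ℝ (greenFn 1) x x) ξ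
        = -2 * (((4 * Real.pi ^ 2 * ‖ξ‖ ^ 2 + 1 : ℝ) : ℂ))⁻¹ * fourierTf (greenFn 1) ξ := by
  constructor
  · exact integrable_dilG.congr fderiv_green_ae.symm
  · intro ξ
    have ha : 0 < 4*π^2*‖ξ‖^2 + 1 := by positivity
    have he : fourierTf (fun x : E2 => fderiv ℝ (greenFn 1) x x) ξ = fourierTf dilG ξ := by
      rw [fourierTf, fourierTf]
      apply integral_congr_ae
      filter_upwards [fderiv_green_ae] with x hx
      rw [hx]
    rw [he, fourier_dilG ξ, fourier_green ξ]
    rw [show -(2*π)⁻¹ * (4*π*(((4*π^2*‖ξ‖^2 + 1 : ℝ)⁻¹)^2))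
        = -2 * (4*π^2*‖ξ‖^2 + 1 : ℝ)⁻¹ * (4*π^2*‖ξ‖^2 + 1 : ℝ)⁻¹ from by
      field_simp
      ring]
    push_cast
    ring

end
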